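/- Let p be a probability distribution on X × Y × Z (finite sets) and ε ≥ 0. Suppose there exists a conditionally independent distribution p' on X × Y × Z with d_TV(p, p') ≤ ε. Define q on X × Y × Z by q(i,j,z) := p_Z(z) · p_{z,X}(i) · p_{z,Y}(j). Then d_TV(p, q) ≤ 4ε. -/

import Mathlib

open Finset

/-- Total variation distance between two functions on a finite type. -/
noncomputable def dTV {Ω : Type*} [Fintype Ω] (p q : Ω → ℝ) : ℝ :=
  (1 / 2) * ∑ ω, |p ω - q ω|

/-- The `Z`-marginal of a distribution on `X × Y × Z`. -/
noncomputable def margZ {X Y Z : Type*} [Fintype X] [Fintype Y]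
    (p : X × Y × Z → ℝ) (z : Z) : ℝ :=
  ∑ i, ∑ j, p (i, j, z)

/-- The conditional distribution on `X × Y` given `Z = z` (division by zero yields 0). -/
noncomputable def condZ {X Y Z : Type*} [Fintype X] [Fintype Y]
    (p : X × Y × Z → ℝ) (z : Z) : X × Y → ℝ :=
  fun ij => p (ij.1, ij.2, z) / margZ p z

/-- Rewriting a sum over a triple product as an iterated sum with `z` outermost. -/
lemma sum3 {X Y Z : Type*} [Fintype X] [Fintype Y] [Fintype Z] (f : X × Y × Z → ℝ) :
    ∑ ω, f ω = ∑ z, ∑ i, ∑ j, f (i, j, z) := by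
  rw [Fintype.sum_prod_type]
  simp only [Fintype.sum_prod_type]
  have h1 : ∀ i : X, ∑ j : Y, ∑ z : Z, f (i,j,z) = ∑ z : Z, ∑ j : Y, f (i,j,z) :=
    fun i => Finset.sum_comm
  simp_rw [h1]
  exact Finset.sum_comm

theorem stmt1 {X Y Z : Type*} [Fintype X] [Fintype Y] [Fintype Z]
    (p : X × Y × Z → ℝ) (hp0 : ∀ ω, 0 ≤ p ω) (hp1 : ∑ ω, p ω = 1)
    (ε : ℝ) (hε : 0 ≤ ε)
    (h : ∃ p' : X × Y × Z → ℝ, (∀ ω, 0 ≤ p' ω) ∧ (∑ ω, p' ω = 1) ∧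
      (∀ i j z, p' (i, j, z) * margZ p' z =
        (∑ j', p' (i, j', z)) * (∑ i', p' (i', j, z))) ∧
      dTV p p' ≤ ε) :
    dTV p (fun ω => margZ p ω.2.2 * ((∑ j, condZ p ω.2.2 (ω.1, j)) *
      (∑ i, condZ p ω.2.2 (i, ω.2.1)))) ≤ 4 * ε := by
  obtain ⟨p', h0', h1', hCI, hd⟩ := h
  set q : X × Y × Z → ℝ := fun ω => margZ p ω.2.2 * ((∑ j, condZ p ω.2.2 (ω.1, j)) *
      (∑ i, condZ p ω.2.2 (i, ω.2.1))) with hqdef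
  -- basic positivity facts
  have hM0 : ∀ z, (0:ℝ) ≤ margZ p z := fun z =>
    Finset.sum_nonneg fun i _ => Finset.sum_nonneg fun j _ => hp0 _
  have hM0' : ∀ z, (0:ℝ) ≤ margZ p' z := fun z =>
    Finset.sum_nonneg fun i _ => Finset.sum_nonneg fun j _ => h0' _
  have hmY0 : ∀ j z, (0:ℝ) ≤ ∑ i, p (i,j,z) := fun j z =>
    Finset.sum_nonneg fun i _ => hp0 _
  have hmX0' : ∀ i z, (0:ℝ) ≤ ∑ j, p' (i,j,z) := fun i z =>
    Finset.sum_nonneg fun j _ => h0' _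
  -- margZ as a Y-sum
  have hMY : ∀ z, margZ p z = ∑ j, ∑ i, p (i,j,z) := fun z => Finset.sum_comm
  -- vanishing marginals
  have hMzero : ∀ z, margZ p z = 0 → ∀ j, ∑ i, p (i,j,z) = 0 := by
    intro z hz j
    have h0 : ∑ j, ∑ i, p (i,j,z) = 0 := by rw [← hMY z]; exact hz
    exact (Finset.sum_eq_zero_iff_of_nonneg (fun j _ => hmY0 j z)).mp h0 j (mem_univ j)
  have hMzeroX' : ∀ z, margZ p' z = 0 → ∀ i, ∑ j, p' (i,j,z) = 0 := by
    intro z hz i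
    exact (Finset.sum_eq_zero_iff_of_nonneg (fun i _ => hmX0' i z)).mp hz i (mem_univ i)
  have hp'zero : ∀ z, margZ p' z = 0 → ∀ i j, p' (i,j,z) = 0 := by
    intro z hz i j
    exact (Finset.sum_eq_zero_iff_of_nonneg (fun j _ => h0' _)).mp (hMzeroX' z hz i) j
      (mem_univ j)
  have hMzeroY' : ∀ z, margZ p' z = 0 → ∀ j, ∑ i, p' (i,j,z) = 0 := by
    intro z hz j
    exact Finset.sum_eq_zero fun i _ => hp'zero z hz i j
  -- factorization of q
  have hq_eq : ∀ i j z, q (i,j,z) =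
      (∑ j', p (i,j',z)) * ((∑ i', p (i',j,z)) / margZ p z) := by
    intro i j z
    have h1 : (∑ j', condZ p z (i, j')) = (∑ j', p (i,j',z)) / margZ p z := by
      simp [condZ, Finset.sum_div]
    have h2 : (∑ i', condZ p z (i', j)) = (∑ i', p (i',j,z)) / margZ p z := by
      simp [condZ, Finset.sum_div]
    show margZ p z * ((∑ j', condZ p z (i, j')) * (∑ i', condZ p z (i', j))) = _
    rw [h1, h2]
    rcases eq_or_ne (margZ p z) 0 with hz|hz
    · simp [hz]
    · field_simp
  -- factorization of p'
  have hp'_eq : ∀ i j z, p' (i,j,z) =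
      (∑ j', p' (i,j',z)) * ((∑ i', p' (i',j,z)) / margZ p' z) := by
    intro i j z
    rcases eq_or_ne (margZ p' z) 0 with hz|hz
    · rw [hp'zero z hz i j, hz]; simp
    · field_simp
      linear_combination hCI i j z
  -- pointwise bound
  have hpt : ∀ i j z, |p' (i,j,z) - q (i,j,z)| ≤
      |(∑ j', p (i,j',z)) - (∑ j', p' (i,j',z))| * ((∑ i', p (i',j,z)) / margZ p z)
      + (∑ j', p' (i,j',z)) *
        |(∑ i', p (i',j,z)) / margZ p z - (∑ i', p' (i',j,z)) / margZ p' z| := by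
    intro i j z
    rw [hq_eq i j z, hp'_eq i j z]
    set a := (∑ j', p (i,j',z)) with ha_def
    set a' := (∑ j', p' (i,j',z)) with ha'_def
    set b := (∑ i', p (i',j,z)) / margZ p z with hb_def
    set b' := (∑ i', p' (i',j,z)) / margZ p' z with hb'_def
    have hb : 0 ≤ b := div_nonneg (hmY0 j z) (hM0 z)
    have ha' : 0 ≤ a' := hmX0' i z
    have key : a' * b' - a * b = a' * (b' - b) + (a' - a) * b := by ring
    calc |a' * b' - a * b| = |a' * (b' - b) + (a' - a) * b| := by rw [key]
      _ ≤ |a' * (b' - b)| + |(a' - a) * b| := abs_add_le _ _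
      _ = a' * |b' - b| + |a' - a| * b := by
          rw [abs_mul, abs_mul, abs_of_nonneg ha', abs_of_nonneg hb]
      _ = |a - a'| * b + a' * |b - b'| := by
          rw [abs_sub_comm a, abs_sub_comm b]; ring
  -- sum of b over j is at most 1
  have hbsum : ∀ z, ∑ j, (∑ i, p (i,j,z)) / margZ p z ≤ 1 := by
    intro z
    rw [← Finset.sum_div, ← hMY z]
    exact div_self_le_one _
  have hbsum0 : ∀ z, (0:ℝ) ≤ ∑ j, (∑ i, p (i,j,z)) / margZ p z :=
    fun z => Finset.sum_nonneg fun j _ => div_nonneg (hmY0 j z) (hM0 z)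
  -- M * b = mY
  have hMb : ∀ j z, margZ p z * ((∑ i, p (i,j,z)) / margZ p z) = ∑ i, p (i,j,z) := by
    intro j z
    rcases eq_or_ne (margZ p z) 0 with hz|hz
    · rw [hz, hMzero z hz j]; simp
    · exact mul_div_cancel₀ _ hz
  have hMb' : ∀ j z, margZ p' z * ((∑ i, p' (i,j,z)) / margZ p' z) = ∑ i, p' (i,j,z) := by
    intro j z
    rcases eq_or_ne (margZ p' z) 0 with hz|hz
    · rw [hz, hMzeroY' z hz j]; simp
    · exact mul_div_cancel₀ _ hz
  -- second pointwise bound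
  have hpt2 : ∀ j z, margZ p' z *
      |(∑ i, p (i,j,z)) / margZ p z - (∑ i, p' (i,j,z)) / margZ p' z| ≤
      ((∑ i, p (i,j,z)) / margZ p z) * |margZ p z - margZ p' z|
      + |(∑ i, p (i,j,z)) - (∑ i, p' (i,j,z))| := by
    intro j z
    set b := (∑ i, p (i,j,z)) / margZ p z with hb_def
    set b' := (∑ i, p' (i,j,z)) / margZ p' z with hb'_def
    have hb : 0 ≤ b := div_nonneg (hmY0 j z) (hM0 z)
    have e1 : margZ p' z * |b - b'| = |margZ p' z * b - margZ p' z * b'| := by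
      rw [← mul_sub, abs_mul, abs_of_nonneg (hM0' z)]
    rw [e1]
    have e2 : margZ p' z * b - margZ p' z * b' =
        (margZ p' z - margZ p z) * b + (margZ p z * b - margZ p' z * b') := by ring
    calc |margZ p' z * b - margZ p' z * b'|
        = |(margZ p' z - margZ p z) * b + (margZ p z * b - margZ p' z * b')| := by rw [e2]
      _ ≤ |(margZ p' z - margZ p z) * b| + |margZ p z * b - margZ p' z * b'| := abs_add_le _ _
      _ = b * |margZ p z - margZ p' z| + |(∑ i, p (i,j,z)) - (∑ i, p' (i,j,z))| := by
          rw [abs_mul, abs_of_nonneg hb, abs_sub_comm, hMb j z, hMb' j z]; ring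
  -- per-z bound
  have hSz : ∀ z, ∑ i, ∑ j, |p' (i,j,z) - q (i,j,z)| ≤
      (∑ i, |(∑ j', p (i,j',z)) - (∑ j', p' (i,j',z))|)
      + |margZ p z - margZ p' z|
      + ∑ j, |(∑ i, p (i,j,z)) - (∑ i, p' (i,j,z))| := by
    intro z
    have step1 : ∑ i, ∑ j, |p' (i,j,z) - q (i,j,z)| ≤
        (∑ i, |(∑ j', p (i,j',z)) - (∑ j', p' (i,j',z))|) *
          (∑ j, (∑ i, p (i,j,z)) / margZ p z)
        + margZ p' z * ∑ j,
            |(∑ i, p (i,j,z)) / margZ p z - (∑ i, p' (i,j,z)) / margZ p' z| := by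
      have inner : ∀ i, ∑ j, |p' (i,j,z) - q (i,j,z)| ≤
          |(∑ j', p (i,j',z)) - (∑ j', p' (i,j',z))| *
            (∑ j, (∑ i, p (i,j,z)) / margZ p z)
          + (∑ j', p' (i,j',z)) * ∑ j,
              |(∑ i, p (i,j,z)) / margZ p z - (∑ i, p' (i,j,z)) / margZ p' z| := by
        intro i
        rw [Finset.mul_sum, Finset.mul_sum, ← Finset.sum_add_distrib]
        exact Finset.sum_le_sum fun j _ => hpt i j z
      calc ∑ i, ∑ j, |p' (i,j,z) - q (i,j,z)|
          ≤ ∑ i, (|(∑ j', p (i,j',z)) - (∑ j', p' (i,j',z))| *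
              (∑ j, (∑ i, p (i,j,z)) / margZ p z)
            + (∑ j', p' (i,j',z)) * ∑ j,
                |(∑ i, p (i,j,z)) / margZ p z - (∑ i, p' (i,j,z)) / margZ p' z|) :=
            Finset.sum_le_sum fun i _ => inner i
        _ = (∑ i, |(∑ j', p (i,j',z)) - (∑ j', p' (i,j',z))|) *
              (∑ j, (∑ i, p (i,j,z)) / margZ p z)
            + margZ p' z * ∑ j,
                |(∑ i, p (i,j,z)) / margZ p z - (∑ i, p' (i,j,z)) / margZ p' z| := by
            rw [Finset.sum_add_distrib, ← Finset.sum_mul, ← Finset.sum_mul]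
            rfl
    have step2 : (∑ i, |(∑ j', p (i,j',z)) - (∑ j', p' (i,j',z))|) *
        (∑ j, (∑ i, p (i,j,z)) / margZ p z)
        ≤ ∑ i, |(∑ j', p (i,j',z)) - (∑ j', p' (i,j',z))| := by
      have h1 : (0:ℝ) ≤ ∑ i, |(∑ j', p (i,j',z)) - (∑ j', p' (i,j',z))| :=
        Finset.sum_nonneg fun i _ => abs_nonneg _
      calc _ ≤ (∑ i, |(∑ j', p (i,j',z)) - (∑ j', p' (i,j',z))|) * 1 :=
            mul_le_mul_of_nonneg_left (hbsum z) h1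
        _ = _ := mul_one _
    have step3 : margZ p' z * ∑ j,
        |(∑ i, p (i,j,z)) / margZ p z - (∑ i, p' (i,j,z)) / margZ p' z|
        ≤ |margZ p z - margZ p' z|
          + ∑ j, |(∑ i, p (i,j,z)) - (∑ i, p' (i,j,z))| := by
      rw [Finset.mul_sum]
      calc ∑ j, margZ p' z *
          |(∑ i, p (i,j,z)) / margZ p z - (∑ i, p' (i,j,z)) / margZ p' z|
          ≤ ∑ j, (((∑ i, p (i,j,z)) / margZ p z) * |margZ p z - margZ p' z|
              + |(∑ i, p (i,j,z)) - (∑ i, p' (i,j,z))|) :=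
            Finset.sum_le_sum fun j _ => hpt2 j z
        _ = (∑ j, (∑ i, p (i,j,z)) / margZ p z) * |margZ p z - margZ p' z|
            + ∑ j, |(∑ i, p (i,j,z)) - (∑ i, p' (i,j,z))| := by
            rw [Finset.sum_add_distrib, ← Finset.sum_mul]
        _ ≤ 1 * |margZ p z - margZ p' z|
            + ∑ j, |(∑ i, p (i,j,z)) - (∑ i, p' (i,j,z))| :=
            add_le_add (mul_le_mul_of_nonneg_right (hbsum z) (abs_nonneg _)) le_rfl
        _ = |margZ p z - margZ p' z|
            + ∑ j, |(∑ i, p (i,j,z)) - (∑ i, p' (i,j,z))| := by rw [one_mul]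
    linarith
  -- total variation pieces vs the p-p' distance
  set T : ℝ := ∑ ω, |p ω - p' ω| with hT_def
  have hT : ∑ z, ∑ i, ∑ j, |p (i,j,z) - p' (i,j,z)| = T := by
    rw [hT_def]
    exact (sum3 (fun ω => |p ω - p' ω|)).symm
  have hDX : ∑ z, ∑ i, |(∑ j', p (i,j',z)) - (∑ j', p' (i,j',z))| ≤ T := by
    rw [← hT]
    refine Finset.sum_le_sum fun z _ => Finset.sum_le_sum fun i _ => ?_
    rw [← Finset.sum_sub_distrib]
    exact Finset.abs_sum_le_sum_abs _ _
  have hDY : ∑ z, ∑ j, |(∑ i, p (i,j,z)) - (∑ i, p' (i,j,z))| ≤ T := by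
    rw [← hT]
    refine Finset.sum_le_sum fun z _ => ?_
    have e : ∑ i, ∑ j, |p (i,j,z) - p' (i,j,z)| = ∑ j, ∑ i, |p (i,j,z) - p' (i,j,z)| :=
      Finset.sum_comm
    rw [e]
    refine Finset.sum_le_sum fun j _ => ?_
    rw [← Finset.sum_sub_distrib]
    exact Finset.abs_sum_le_sum_abs _ _
  have hD0 : ∑ z, |margZ p z - margZ p' z| ≤ T := by
    rw [← hT]
    refine Finset.sum_le_sum fun z _ => ?_
    simp only [margZ]
    rw [← Finset.sum_sub_distrib]
    calc |∑ i, ((∑ j, p (i,j,z)) - ∑ j, p' (i,j,z))|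
        ≤ ∑ i, |(∑ j, p (i,j,z)) - ∑ j, p' (i,j,z)| := Finset.abs_sum_le_sum_abs _ _
      _ ≤ ∑ i, ∑ j, |p (i,j,z) - p' (i,j,z)| := by
          refine Finset.sum_le_sum fun i _ => ?_
          rw [← Finset.sum_sub_distrib]
          exact Finset.abs_sum_le_sum_abs _ _
  -- assemble
  have hsum_p'q : ∑ ω, |p' ω - q ω| ≤ 3 * T := by
    rw [sum3 (fun ω => |p' ω - q ω|)]
    calc ∑ z, ∑ i, ∑ j, |p' (i,j,z) - q (i,j,z)|
        ≤ ∑ z, ((∑ i, |(∑ j', p (i,j',z)) - (∑ j', p' (i,j',z))|)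
            + |margZ p z - margZ p' z|
            + ∑ j, |(∑ i, p (i,j,z)) - (∑ i, p' (i,j,z))|) :=
          Finset.sum_le_sum fun z _ => hSz z
      _ = (∑ z, ∑ i, |(∑ j', p (i,j',z)) - (∑ j', p' (i,j',z))|)
          + (∑ z, |margZ p z - margZ p' z|)
          + ∑ z, ∑ j, |(∑ i, p (i,j,z)) - (∑ i, p' (i,j,z))| := by
          rw [Finset.sum_add_distrib, Finset.sum_add_distrib]
      _ ≤ 3 * T := by linarith
  have hTle : T ≤ 2 * ε := by
    simp only [dTV] at hd
    rw [← hT_def] at hd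
    linarith
  have htri : ∑ ω, |p ω - q ω| ≤ T + ∑ ω, |p' ω - q ω| := by
    rw [hT_def, ← Finset.sum_add_distrib]
    exact Finset.sum_le_sum fun ω _ => by
      calc |p ω - q ω| = |(p ω - p' ω) + (p' ω - q ω)| := by rw [sub_add_sub_cancel]
        _ ≤ |p ω - p' ω| + |p' ω - q ω| := abs_add_le _ _
  show (1/2) * ∑ ω, |p ω - q ω| ≤ 4 * ε
  linarith
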